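/- Let G₁, G₂ be graphs with maximum degrees Δ₁, Δ₂ and minimum degrees δ₁, δ₂. If S₁ is an offensive k₁-alliance free set in G₁ and S₂ is an offensive k₂-alliance free set in G₂, then (S₁ × V₂) ∪ (V₁ × S₂) is an offensive k-alliance free set in G₁ □ G₂ for every k ≥ max{k₁ − δ₂, k₂ − δ₁, min{k₂ + Δ₁, k₁ + Δ₂}}. -/
import Mathlib


open Classical

/-- Number of neighbors of `v` inside `S`. -/
noncomputable def dS {V : Type*} (G : SimpleGraph V) (S : Set V) (v : V) : ℕ :=
  {u ∈ S | G.Adj v u}.ncard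

/-- `S` is a defensive `k`-alliance. -/
def IsDefAlliance {V : Type*} (G : SimpleGraph V) (k : ℤ) (S : Set V) : Prop :=
  S.Nonempty ∧ ∀ v ∈ S, (dS G S v : ℤ) ≥ (dS G Sᶜ v : ℤ) + k

/-- `X` is a defensive `k`-alliance free set. -/
def IsDafFree {V : Type*} (G : SimpleGraph V) (k : ℤ) (X : Set V) : Prop :=
  ∀ S : Set V, S ⊆ X → ¬ IsDefAlliance G k S

/-- Boundary: vertices outside `S` with a neighbor in `S`. -/
def obdry {V : Type*} (G : SimpleGraph V) (S : Set V) : Set V :=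
  {v | v ∉ S ∧ ∃ u ∈ S, G.Adj v u}

/-- `S` is an offensive `k`-alliance. -/
def IsOffAlliance {V : Type*} (G : SimpleGraph V) (k : ℤ) (S : Set V) : Prop :=
  S.Nonempty ∧ ∀ v ∈ obdry G S, (dS G S v : ℤ) ≥ (dS G Sᶜ v : ℤ) + k

/-- `X` is an offensive `k`-alliance free set. -/
def IsOafFree {V : Type*} (G : SimpleGraph V) (k : ℤ) (X : Set V) : Prop :=
  ∀ S : Set V, S ⊆ X → ¬ IsOffAlliance G k S

/-- `S` is a powerful `k`-alliance. -/
def IsPowAlliance {V : Type*} (G : SimpleGraph V) (k : ℤ) (S : Set V) : Prop :=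
  IsDefAlliance G k S ∧ IsOffAlliance G (k + 2) S

/-- `X` is a powerful `k`-alliance free set. -/
def IsPafFree {V : Type*} (G : SimpleGraph V) (k : ℤ) (X : Set V) : Prop :=
  ∀ S : Set V, S ⊆ X → ¬ IsPowAlliance G k S

/-- Maximum cardinality of a defensive `k`-alliance free set. -/
noncomputable def phiD {V : Type*} (G : SimpleGraph V) (k : ℤ) : ℕ :=
  sSup {n : ℕ | ∃ X : Set V, IsDafFree G k X ∧ X.ncard = n}

/-- Maximum cardinality of an offensive `k`-alliance free set. -/
noncomputable def phiO {V : Type*} (G : SimpleGraph V) (k : ℤ) : ℕ :=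
  sSup {n : ℕ | ∃ X : Set V, IsOafFree G k X ∧ X.ncard = n}

/-- Maximum cardinality of a powerful `k`-alliance free set. -/
noncomputable def phiP {V : Type*} (G : SimpleGraph V) (k : ℤ) : ℕ :=
  sSup {n : ℕ | ∃ X : Set V, IsPafFree G k X ∧ X.ncard = n}

lemma dS_mono {V : Type*} [Finite V] (G : SimpleGraph V) {S T : Set V} (h : S ⊆ T) (v : V) :
    dS G S v ≤ dS G T v :=
  Set.ncard_le_ncard (fun u hu => ⟨h hu.1, hu.2⟩) (Set.toFinite _)

lemma dS_univ {V : Type*} [Fintype V] (G : SimpleGraph V) [DecidableRel G.Adj] (v : V) :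
    dS G Set.univ v = G.degree v := by
  have : {u ∈ (Set.univ : Set V) | G.Adj v u} = G.neighborSet v := by
    ext u; simp [SimpleGraph.mem_neighborSet]
  rw [dS, this, Set.ncard_eq_toFinset_card', ← SimpleGraph.neighborFinset_def]
  rfl

lemma dS_le_maxDegree {V : Type*} [Fintype V] (G : SimpleGraph V) [DecidableRel G.Adj]
    (S : Set V) (v : V) : dS G S v ≤ G.maxDegree := by
  calc dS G S v ≤ dS G Set.univ v := dS_mono G (Set.subset_univ S) v
  _ = G.degree v := dS_univ G v
  _ ≤ G.maxDegree := G.degree_le_maxDegree v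

lemma dS_empty {V : Type*} (G : SimpleGraph V) (v : V) : dS G ∅ v = 0 := by
  simp [dS]

lemma dS_boxProd {V₁ V₂ : Type*} [Fintype V₁] [Fintype V₂]
    (G₁ : SimpleGraph V₁) (G₂ : SimpleGraph V₂)
    (S : Set (V₁ × V₂)) (a : V₁) (b : V₂) :
    dS (G₁.boxProd G₂) S (a, b) =
      dS G₁ {x | (x, b) ∈ S} a + dS G₂ {y | (a, y) ∈ S} b := by
  have hset : {u ∈ S | (G₁.boxProd G₂).Adj (a, b) u} =
      ((fun x => (x, b)) '' {x ∈ {x | (x, b) ∈ S} | G₁.Adj a x}) ∪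
      ((fun y => (a, y)) '' {y ∈ {y | (a, y) ∈ S} | G₂.Adj b y}) := by
    ext ⟨x, y⟩
    simp only [Set.mem_sep_iff, SimpleGraph.boxProd_adj, Set.mem_union, Set.mem_image,
      Set.mem_setOf_eq, Prod.mk.injEq]
    constructor
    · rintro ⟨hmem, (⟨hadj, rfl⟩ | ⟨hadj, rfl⟩)⟩
      · exact Or.inl ⟨x, ⟨hmem, hadj⟩, rfl, rfl⟩
      · exact Or.inr ⟨y, ⟨hmem, hadj⟩, rfl, rfl⟩
    · rintro (⟨x', ⟨hm, ha⟩, rfl, rfl⟩ | ⟨y', ⟨hm, ha⟩, rfl, rfl⟩)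
      · exact ⟨hm, Or.inl ⟨ha, rfl⟩⟩
      · exact ⟨hm, Or.inr ⟨ha, rfl⟩⟩
  have hinj1 : Function.Injective (fun x : V₁ => (x, b)) := fun _ _ h => (Prod.mk.injEq ..).mp h |>.1
  have hinj2 : Function.Injective (fun y : V₂ => (a, y)) := fun _ _ h => (Prod.mk.injEq ..).mp h |>.2
  have hdisj : Disjoint ((fun x => (x, b)) '' {x ∈ {x | (x, b) ∈ S} | G₁.Adj a x})
      ((fun y => (a, y)) '' {y ∈ {y | (a, y) ∈ S} | G₂.Adj b y}) := by
    rw [Set.disjoint_left]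
    rintro ⟨x, y⟩ ⟨x', ⟨_, ha⟩, hx⟩ ⟨y', ⟨_, hb⟩, hy⟩
    obtain ⟨rfl, rfl⟩ := Prod.mk.injEq .. |>.mp hx
    obtain ⟨h1, h2⟩ := Prod.mk.injEq .. |>.mp hy
    exact G₁.irrefl (h1 ▸ ha)
  rw [dS, hset, Set.ncard_union_eq hdisj (Set.toFinite _) (Set.toFinite _),
    Set.ncard_image_of_injective _ hinj1, Set.ncard_image_of_injective _ hinj2]
  rfl

lemma aux_main {V₁ V₂ : Type*} [Fintype V₁] [Fintype V₂] [Nonempty V₁] [Nonempty V₂]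
    (G₁ : SimpleGraph V₁) (G₂ : SimpleGraph V₂)
    [DecidableRel G₁.Adj] [DecidableRel G₂.Adj]
    (k₁ k₂ k : ℤ) (S₁ : Set V₁) (S₂ : Set V₂)
    (h₁ : IsOafFree G₁ k₁ S₁) (h₂ : IsOafFree G₂ k₂ S₂)
    (hkA : k₁ - (G₂.minDegree : ℤ) ≤ k) (hkC : k₂ + (G₁.maxDegree : ℤ) ≤ k)
    (S : Set (V₁ × V₂))
    (hSX : S ⊆ (S₁ ×ˢ (Set.univ : Set V₂)) ∪ ((Set.univ : Set V₁) ×ˢ S₂)) :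
    ¬ IsOffAlliance (G₁.boxProd G₂) k S := by
  rintro ⟨hne, hall⟩
  set col : V₁ → Set V₂ := fun a => {y | (a, y) ∈ S} with hcol
  by_cases hcase : ∃ a, a ∉ S₁ ∧ (col a).Nonempty
  · -- column at a is an offensive k₂-alliance inside S₂
    obtain ⟨a, haS, hanem⟩ := hcase
    have hsub : col a ⊆ S₂ := by
      intro y hy
      rcases hSX hy with h | h
      · exact absurd h.1 haS
      · exact h.2
    refine h₂ (col a) hsub ⟨hanem, ?_⟩
    intro y hy
    obtain ⟨hynot, y', hy', hadj⟩ := hy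
    have hbd : (a, y) ∈ obdry (G₁.boxProd G₂) S := by
      refine ⟨hynot, (a, y'), hy', ?_⟩
      exact Or.inr ⟨hadj, rfl⟩
    have hkey := hall _ hbd
    rw [dS_boxProd, dS_boxProd] at hkey
    have e1 : {y' | (a, y') ∈ Sᶜ} = (col a)ᶜ := rfl
    rw [e1] at hkey
    have b1 : dS G₁ {x | (x, y) ∈ S} a ≤ G₁.maxDegree := dS_le_maxDegree G₁ _ a
    have b2 : (0:ℤ) ≤ dS G₁ {x | (x, y) ∈ Sᶜ} a := Int.ofNat_nonneg _
    have b1' : (dS G₁ {x | (x, y) ∈ S} a : ℤ) ≤ (G₁.maxDegree : ℤ) := by exact_mod_cast b1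
    push_cast at hkey
    linarith
  · -- projection onto V₁ is an offensive k₁-alliance inside S₁
    push_neg at hcase
    set P : Set V₁ := {a | (col a).Nonempty} with hP
    have hPsub : P ⊆ S₁ := by
      intro a ha
      by_contra h
      have ha' : (col a).Nonempty := ha
      rw [hcase a h] at ha'
      exact Set.not_nonempty_empty ha'
    refine h₁ P hPsub ⟨?_, ?_⟩
    · obtain ⟨⟨a, b⟩, hab⟩ := hne
      exact ⟨a, ⟨b, hab⟩⟩
    intro x hx
    obtain ⟨hxnot, a, haP, hadj⟩ := hx
    obtain ⟨y, hy⟩ := haP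
    have hcolx : col x = ∅ := by
      by_contra h
      exact hxnot (Set.nonempty_iff_ne_empty.mpr h)
    have hxy : (x, y) ∉ S := by
      intro h
      have : y ∈ col x := h
      rw [hcolx] at this
      exact this
    have hbd : (x, y) ∈ obdry (G₁.boxProd G₂) S :=
      ⟨hxy, (a, y), hy, Or.inl ⟨hadj, rfl⟩⟩
    have hkey := hall _ hbd
    rw [dS_boxProd, dS_boxProd] at hkey
    -- col x = ∅ so the S part over the column is zero
    have e0 : dS G₂ {y' | (x, y') ∈ S} y = 0 := by
      have : {y' | (x, y') ∈ S} = (∅ : Set V₂) := hcolx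
      rw [this, dS_empty]
    -- and the Sᶜ part over the column is all of deg y
    have e1 : dS G₂ {y' | (x, y') ∈ Sᶜ} y = G₂.degree y := by
      have : {y' | (x, y') ∈ Sᶜ} = (Set.univ : Set V₂) := by
        ext y'
        simp only [Set.mem_setOf_eq, Set.mem_univ, iff_true, Set.mem_compl_iff]
        intro h
        have : y' ∈ col x := h
        rw [hcolx] at this
        exact this
      rw [this, dS_univ]
    have e2 : dS G₁ {x' | (x', y) ∈ S} x ≤ dS G₁ P x := by
      refine dS_mono G₁ ?_ x
      intro x' hx'
      exact ⟨y, hx'⟩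
    have e3 : dS G₁ Pᶜ x ≤ dS G₁ {x' | (x', y) ∈ Sᶜ} x := by
      refine dS_mono G₁ ?_ x
      intro x' hx'
      have hc : col x' = ∅ := by
        by_contra h
        exact hx' (Set.nonempty_iff_ne_empty.mpr h)
      intro h
      have : y ∈ col x' := h
      rw [hc] at this
      exact this
    have hdeg : (G₂.minDegree : ℤ) ≤ (G₂.degree y : ℤ) := by
      exact_mod_cast G₂.minDegree_le_degree y
    rw [e0, e1] at hkey
    have e2' : (dS G₁ {x' | (x', y) ∈ S} x : ℤ) ≤ (dS G₁ P x : ℤ) := by exact_mod_cast e2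
    have e3' : (dS G₁ Pᶜ x : ℤ) ≤ (dS G₁ {x' | (x', y) ∈ Sᶜ} x : ℤ) := by exact_mod_cast e3
    push_cast at hkey
    linarith

lemma boxProd_adj_swap {V₁ V₂ : Type*} (G₁ : SimpleGraph V₁) (G₂ : SimpleGraph V₂)
    (u v : V₁ × V₂) : (G₂.boxProd G₁).Adj u.swap v.swap ↔ (G₁.boxProd G₂).Adj u v := by
  simp only [SimpleGraph.boxProd_adj, Prod.fst_swap, Prod.snd_swap]
  tauto

lemma dS_swap {V₁ V₂ : Type*} [Fintype V₁] [Fintype V₂]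
    (G₁ : SimpleGraph V₁) (G₂ : SimpleGraph V₂)
    (S : Set (V₁ × V₂)) (a : V₁) (b : V₂) :
    dS (G₂.boxProd G₁) (Prod.swap '' S) (b, a) = dS (G₁.boxProd G₂) S (a, b) := by
  rw [dS_boxProd, dS_boxProd, Set.image_swap_eq_preimage_swap]
  have e1 : {y | (y, a) ∈ Prod.swap ⁻¹' S} = {y | (a, y) ∈ S} := rfl
  have e2 : {x | (b, x) ∈ Prod.swap ⁻¹' S} = {x | (x, b) ∈ S} := rfl
  rw [e1, e2, Nat.add_comm]

lemma offAlliance_swap {V₁ V₂ : Type*} [Fintype V₁] [Fintype V₂]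
    (G₁ : SimpleGraph V₁) (G₂ : SimpleGraph V₂) (k : ℤ) (S : Set (V₁ × V₂))
    (h : IsOffAlliance (G₁.boxProd G₂) k S) :
    IsOffAlliance (G₂.boxProd G₁) k (Prod.swap '' S) := by
  obtain ⟨hne, hall⟩ := h
  refine ⟨hne.image _, ?_⟩
  rintro ⟨b, a⟩ ⟨hnot, ⟨b', a'⟩, hmem, hadj⟩
  rw [Set.image_swap_eq_preimage_swap] at hnot hmem
  have hbd : (a, b) ∈ obdry (G₁.boxProd G₂) S := by
    refine ⟨hnot, (a', b'), hmem, ?_⟩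
    exact (boxProd_adj_swap G₁ G₂ (a, b) (a', b')).mp hadj
  have hkey := hall _ hbd
  have hc : (Prod.swap '' S)ᶜ = Prod.swap '' (Sᶜ) := by
    rw [Set.image_swap_eq_preimage_swap]
    rfl
  rw [hc, dS_swap, dS_swap]
  exact hkey

theorem stmt15 {V₁ V₂ : Type*} [Fintype V₁] [Fintype V₂] [Nonempty V₁] [Nonempty V₂]
    (G₁ : SimpleGraph V₁) (G₂ : SimpleGraph V₂)
    [DecidableRel G₁.Adj] [DecidableRel G₂.Adj]
    (k₁ k₂ k : ℤ) (S₁ : Set V₁) (S₂ : Set V₂)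
    (h₁ : IsOafFree G₁ k₁ S₁) (h₂ : IsOafFree G₂ k₂ S₂)
    (hk : max (k₁ - (G₂.minDegree : ℤ)) (max (k₂ - (G₁.minDegree : ℤ))
      (min (k₂ + (G₁.maxDegree : ℤ)) (k₁ + (G₂.maxDegree : ℤ)))) ≤ k) :
    IsOafFree (G₁.boxProd G₂) k
      ((S₁ ×ˢ (Set.univ : Set V₂)) ∪ ((Set.univ : Set V₁) ×ˢ S₂)) := by
  have hkA : k₁ - (G₂.minDegree : ℤ) ≤ k := le_trans (le_max_left _ _) hk
  have hkB : k₂ - (G₁.minDegree : ℤ) ≤ k :=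
    le_trans (le_trans (le_max_left _ _) (le_max_right _ _)) hk
  have hkM : min (k₂ + (G₁.maxDegree : ℤ)) (k₁ + (G₂.maxDegree : ℤ)) ≤ k :=
    le_trans (le_trans (le_max_right _ _) (le_max_right _ _)) hk
  intro S hSX hS
  rcases le_total (k₂ + (G₁.maxDegree : ℤ)) (k₁ + (G₂.maxDegree : ℤ)) with hmin | hmin
  · have hkC : k₂ + (G₁.maxDegree : ℤ) ≤ k := by
      rwa [min_eq_left hmin] at hkM
    exact aux_main G₁ G₂ k₁ k₂ k S₁ S₂ h₁ h₂ hkA hkC S hSX hS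
  · have hkC : k₁ + (G₂.maxDegree : ℤ) ≤ k := by
      rwa [min_eq_right hmin] at hkM
    have hSX' : Prod.swap '' S ⊆ (S₂ ×ˢ (Set.univ : Set V₁)) ∪ ((Set.univ : Set V₂) ×ˢ S₁) := by
      rintro ⟨b, a⟩ hba
      rw [Set.image_swap_eq_preimage_swap] at hba
      rcases hSX hba with h | h
      · exact Or.inr ⟨Set.mem_univ _, h.1⟩
      · exact Or.inl ⟨h.2, Set.mem_univ _⟩
    exact aux_main G₂ G₁ k₂ k₁ k S₂ S₁ h₂ h₁ hkB hkC (Prod.swap '' S) hSX'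
      (offAlliance_swap G₁ G₂ k S hS)
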